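/- In the generalized objective α·Rev + (1−α)·SW with α > 0, any optimal solution of the auction design problem must satisfy all local downward incentive constraints with equality; consequently, the payments are uniquely determined by the allocations via p_i(k, k_{-i}) = v_{i,k}·a_i(k, k_{-i}) − ∑_{l=1}^{k-1}(v_{i,l+1} − v_{i,l})·a_i(l, k_{-i}). -/
import Mathlib


open Finset

/-- Feasible auction: pointwise allocation feasibility (`𝒜` constrains
allocations only), nonnegative allocations, local downward and upward DSIC
constraints, individual rationality at the lowest type, and monotonicity.
Values of bidder `i` are `v i 0 < v i 1 < … < v i (K i − 1)`; a profile `b`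
assigns each bidder a value index. -/
def FeasibleAuction {n : ℕ} (K : Fin n → ℕ) (hK : ∀ i, 0 < K i)
    (v : Fin n → ℕ → ℝ) (𝒜 : Set (Fin n → ℝ))
    (a p : (∀ i, Fin (K i)) → Fin n → ℝ) : Prop :=
  (∀ b, a b ∈ 𝒜) ∧
  (∀ b i, 0 ≤ a b i) ∧
  (∀ (i : Fin n) (b : ∀ j, Fin (K j)) (k : ℕ) (h : k + 1 < K i),
    v i (k + 1) * a (Function.update b i ⟨k + 1, h⟩) i
        - p (Function.update b i ⟨k + 1, h⟩) i
      ≥ v i (k + 1) * a (Function.update b i ⟨k, Nat.lt_of_succ_lt h⟩) i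
        - p (Function.update b i ⟨k, Nat.lt_of_succ_lt h⟩) i) ∧
  (∀ (i : Fin n) (b : ∀ j, Fin (K j)) (k : ℕ) (h : k + 1 < K i),
    v i k * a (Function.update b i ⟨k, Nat.lt_of_succ_lt h⟩) i
        - p (Function.update b i ⟨k, Nat.lt_of_succ_lt h⟩) i
      ≥ v i k * a (Function.update b i ⟨k + 1, h⟩) i
        - p (Function.update b i ⟨k + 1, h⟩) i) ∧
  (∀ (i : Fin n) (b : ∀ j, Fin (K j)),
    0 ≤ v i 0 * a (Function.update b i ⟨0, hK i⟩) i
        - p (Function.update b i ⟨0, hK i⟩) i) ∧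
  (∀ (i : Fin n) (b : ∀ j, Fin (K j)) (k : ℕ) (h : k + 1 < K i),
    a (Function.update b i ⟨k, Nat.lt_of_succ_lt h⟩) i
      ≤ a (Function.update b i ⟨k + 1, h⟩) i)

/-- The objective `α·Rev + (1−α)·SW`. -/
noncomputable def AuctionObjective {n : ℕ} (K : Fin n → ℕ) (α : ℝ)
    (f : (∀ i, Fin (K i)) → ℝ) (v : Fin n → ℕ → ℝ)
    (a p : (∀ i, Fin (K i)) → Fin n → ℝ) : ℝ :=
  ∑ b : ∀ i, Fin (K i),
    f b * (α * ∑ i, p b i + (1 - α) * ∑ i, v i (b i).val * a b i)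

open Classical in
/-- Payment perturbation: add `ε` to bidder `i₀`'s payment on every profile that
agrees with `b₀` off `i₀` and where `i₀`'s type index is at least `t`. -/
noncomputable def perturbP {n : ℕ} (K : Fin n → ℕ)
    (p : (∀ i, Fin (K i)) → Fin n → ℝ) (i₀ : Fin n) (b₀ : ∀ j, Fin (K j))
    (t : ℕ) (ε : ℝ) : (∀ i, Fin (K i)) → Fin n → ℝ :=
  fun b j => p b j +
    if j = i₀ ∧ (∀ j', j' ≠ i₀ → b j' = b₀ j') ∧ t ≤ (b i₀).val then ε else 0

lemma perturb_false {n : ℕ} (K : Fin n → ℕ) (hK : ∀ i, 0 < K i)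
    (v : Fin n → ℕ → ℝ)
    (f : (∀ i, Fin (K i)) → ℝ) (hf : ∀ b, 0 < f b)
    (𝒜 : Set (Fin n → ℝ))
    (α : ℝ) (hα : 0 < α)
    (a p : (∀ i, Fin (K i)) → Fin n → ℝ)
    (hfeas : FeasibleAuction K hK v 𝒜 a p)
    (hopt : ∀ a' p', FeasibleAuction K hK v 𝒜 a' p' →
      AuctionObjective K α f v a' p' ≤ AuctionObjective K α f v a p)
    (i₀ : Fin n) (b₀ : ∀ j, Fin (K j)) (t : ℕ) (ht : t < K i₀)
    (ε : ℝ) (hε : 0 < ε)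
    (hslackD : ∀ (b : ∀ j, Fin (K j)), (∀ j', j' ≠ i₀ → b j' = b₀ j') →
      ∀ (k : ℕ) (h : k + 1 < K i₀), t = k + 1 →
      v i₀ (k + 1) * a (Function.update b i₀ ⟨k + 1, h⟩) i₀
          - p (Function.update b i₀ ⟨k + 1, h⟩) i₀ - ε
        ≥ v i₀ (k + 1) * a (Function.update b i₀ ⟨k, Nat.lt_of_succ_lt h⟩) i₀
          - p (Function.update b i₀ ⟨k, Nat.lt_of_succ_lt h⟩) i₀)
    (hslackIR : ∀ (b : ∀ j, Fin (K j)), (∀ j', j' ≠ i₀ → b j' = b₀ j') → t = 0 →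
      0 ≤ v i₀ 0 * a (Function.update b i₀ ⟨0, hK i₀⟩) i₀
          - p (Function.update b i₀ ⟨0, hK i₀⟩) i₀ - ε) : False := by
  classical
  obtain ⟨hA, hpos, hdown, hup, hIR, hmono⟩ := hfeas
  set p' := perturbP K p i₀ b₀ t ε with hp'
  have hne : ∀ (b : ∀ j, Fin (K j)) (j : Fin n), j ≠ i₀ → p' b j = p b j := by
    intro b j hj
    simp [hp', perturbP, hj]
  have hval : ∀ (b : ∀ j, Fin (K j)) (m : ℕ) (hm : m < K i₀),
      p' (Function.update b i₀ ⟨m, hm⟩) i₀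
        = p (Function.update b i₀ ⟨m, hm⟩) i₀ +
          if (∀ j', j' ≠ i₀ → b j' = b₀ j') ∧ t ≤ m then ε else 0 := by
    intro b m hm
    have hupd₀ : ∀ (j' : Fin n), j' ≠ i₀ → Function.update b i₀ ⟨m, hm⟩ j' = b j' :=
      fun j' hj' => Function.update_of_ne hj' _ _
    simp only [hp', perturbP, true_and]
    congr 1
    have h1 : (∀ j', j' ≠ i₀ → Function.update b i₀ ⟨m, hm⟩ j' = b₀ j')
        ↔ (∀ j', j' ≠ i₀ → b j' = b₀ j') := by
      constructor
      · intro h j' hj'; rw [← hupd₀ j' hj']; exact h j' hj'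
      · intro h j' hj'; rw [hupd₀ j' hj']; exact h j' hj'
    have h2 : (Function.update b i₀ ⟨m, hm⟩ i₀).val = m := by simp
    simp [h1, h2]
  have hfeas' : FeasibleAuction K hK v 𝒜 a p' := by
    refine ⟨hA, hpos, ?_, ?_, ?_, hmono⟩
    · intro i b k h
      by_cases hi : i = i₀
      · subst hi
        rw [hval b (k+1) h, hval b k (Nat.lt_of_succ_lt h)]
        have hd := hdown i b k h
        split_ifs with h1 h2 h2
        · linarith
        · have hteq : t = k + 1 := by
            have : ¬ t ≤ k := fun hh => h2 ⟨h1.1, hh⟩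
            omega
          have := hslackD b h1.1 k h hteq
          linarith
        · exact absurd ⟨h2.1, Nat.le_succ_of_le h2.2⟩ h1
        · linarith
      · rw [hne _ _ hi, hne _ _ hi]
        exact hdown i b k h
    · intro i b k h
      by_cases hi : i = i₀
      · subst hi
        rw [hval b (k+1) h, hval b k (Nat.lt_of_succ_lt h)]
        have hu := hup i b k h
        split_ifs with h1 h2 h2
        · linarith
        · exact absurd ⟨h1.1, Nat.le_succ_of_le h1.2⟩ h2
        · linarith
        · linarith
      · rw [hne _ _ hi, hne _ _ hi]
        exact hup i b k h
    · intro i b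
      by_cases hi : i = i₀
      · subst hi
        rw [hval b 0 (hK i)]
        split_ifs with h1
        · have := hslackIR b h1.1 (Nat.le_zero.mp h1.2)
          linarith
        · have := hIR i b
          linarith
      · rw [hne _ _ hi]
        exact hIR i b
  have hsum : ∀ b : ∀ j, Fin (K j), ∑ j, p' b j = ∑ j, p b j +
      (if (∀ j', j' ≠ i₀ → b j' = b₀ j') ∧ t ≤ (b i₀).val then ε else 0) := by
    intro b
    by_cases hD : (∀ j', j' ≠ i₀ → b j' = b₀ j') ∧ t ≤ (b i₀).val
    · have hj : ∀ j : Fin n, p' b j = p b j + if j = i₀ then ε else 0 := by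
        intro j
        by_cases hjj : j = i₀
        · subst hjj
          show p b j + (if j = j ∧ (∀ j', j' ≠ j → b j' = b₀ j') ∧ t ≤ (b j).val then ε else 0)
              = p b j + if j = j then ε else 0
          have hc : j = j ∧ (∀ j', j' ≠ j → b j' = b₀ j') ∧ t ≤ (b j).val := ⟨rfl, hD⟩
          rw [if_pos hc, if_pos rfl]
        · simp [hp', perturbP, hjj]
      rw [Finset.sum_congr rfl fun j _ => hj j, Finset.sum_add_distrib, if_pos hD]
      congr 1
      simp
    · rw [if_neg hD]
      have hj : ∀ j : Fin n, p' b j = p b j := by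
        intro j
        by_cases hjj : j = i₀
        · subst hjj
          simp only [hp', perturbP]
          rw [if_neg (fun hh => hD hh.2), add_zero]
        · exact hne b j hjj
      simp [Finset.sum_congr rfl fun j _ => hj j]
  have hobj : AuctionObjective K α f v a p' = AuctionObjective K α f v a p +
      α * ∑ b : ∀ j, Fin (K j), f b *
        (if (∀ j', j' ≠ i₀ → b j' = b₀ j') ∧ t ≤ (b i₀).val then ε else 0) := by
    unfold AuctionObjective
    rw [Finset.mul_sum, ← Finset.sum_add_distrib]
    apply Finset.sum_congr rfl
    intro b _
    rw [hsum b]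
    ring
  have hpossum : 0 < ∑ b : ∀ j, Fin (K j), f b *
      (if (∀ j', j' ≠ i₀ → b j' = b₀ j') ∧ t ≤ (b i₀).val then ε else 0) := by
    apply Finset.sum_pos'
    · intro b _
      by_cases hD : (∀ j', j' ≠ i₀ → b j' = b₀ j') ∧ t ≤ (b i₀).val
      · rw [if_pos hD]
        exact le_of_lt (mul_pos (hf b) hε)
      · rw [if_neg hD]
        simp
    · refine ⟨Function.update b₀ i₀ ⟨t, ht⟩, Finset.mem_univ _, ?_⟩
      have hD : (∀ j', j' ≠ i₀ → Function.update b₀ i₀ ⟨t, ht⟩ j' = b₀ j') ∧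
          t ≤ (Function.update b₀ i₀ ⟨t, ht⟩ i₀).val := by
        refine ⟨fun j' hj' => Function.update_of_ne hj' _ _, by simp⟩
      rw [if_pos hD]
      exact mul_pos (hf _) hε
  have hle := hopt a p' hfeas'
  rw [hobj] at hle
  nlinarith

noncomputable def allocAt {n : ℕ} (K : Fin n → ℕ)
    (a : (∀ i, Fin (K i)) → Fin n → ℝ) (i : Fin n) (b : ∀ j, Fin (K j))
    (l : ℕ) : ℝ :=
  if h : l < K i then a (Function.update b i ⟨l, h⟩) i else 0

/-- for `α > 0`, any optimal auction satisfies all local downward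
incentive constraints with equality, and hence its payments are uniquely
determined by the allocations via the discrete Myerson payment formula. -/
theorem optimal_auction_downward_binding_and_payment_formula
    {n : ℕ} (K : Fin n → ℕ) (hK : ∀ i, 0 < K i)
    (v : Fin n → ℕ → ℝ)
    (hv : ∀ i k, k + 1 < K i → v i k < v i (k + 1))
    (hv0 : ∀ i k, k < K i → 0 ≤ v i k)
    (f : (∀ i, Fin (K i)) → ℝ) (hf : ∀ b, 0 < f b)
    (𝒜 : Set (Fin n → ℝ)) (h𝒜 : Convex ℝ 𝒜)
    (α : ℝ) (hα : 0 < α) (hα1 : α ≤ 1)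
    (a p : (∀ i, Fin (K i)) → Fin n → ℝ)
    (hfeas : FeasibleAuction K hK v 𝒜 a p)
    (hopt : ∀ a' p', FeasibleAuction K hK v 𝒜 a' p' →
      AuctionObjective K α f v a' p' ≤ AuctionObjective K α f v a p) :
    -- all local downward constraints bind …
    (∀ (i : Fin n) (b : ∀ j, Fin (K j)) (k : ℕ) (h : k + 1 < K i),
      v i (k + 1) * a (Function.update b i ⟨k + 1, h⟩) i
          - p (Function.update b i ⟨k + 1, h⟩) i
        = v i (k + 1) * a (Function.update b i ⟨k, Nat.lt_of_succ_lt h⟩) i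
          - p (Function.update b i ⟨k, Nat.lt_of_succ_lt h⟩) i) ∧
    -- … hence payments are given by the discrete Myerson payment formula
    (∀ (i : Fin n) (b : ∀ j, Fin (K j)),
      p b i = v i (b i).val * a b i
        - ∑ l ∈ (Finset.range (b i).val).attach,
            (v i (l.val + 1) - v i l.val) *
              a (Function.update b i
                  ⟨l.val, Nat.lt_trans (Finset.mem_range.mp l.2) (b i).isLt⟩) i) := by
  classical
  have hupd_eq : ∀ (i : Fin n) (b b' : ∀ j, Fin (K j)),
      (∀ j', j' ≠ i → b' j' = b j') →
      ∀ (x : Fin (K i)), Function.update b' i x = Function.update b i x := by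
    intro i b b' hb x
    funext j
    by_cases hj : j = i
    · subst hj; simp
    · rw [Function.update_of_ne hj, Function.update_of_ne hj, hb j hj]
  have hbind : ∀ (i : Fin n) (b : ∀ j, Fin (K j)) (k : ℕ) (h : k + 1 < K i),
      v i (k + 1) * a (Function.update b i ⟨k + 1, h⟩) i
          - p (Function.update b i ⟨k + 1, h⟩) i
        = v i (k + 1) * a (Function.update b i ⟨k, Nat.lt_of_succ_lt h⟩) i
          - p (Function.update b i ⟨k, Nat.lt_of_succ_lt h⟩) i := by
    intro i b k h
    have hd := hfeas.2.2.1 i b k h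
    by_contra hne
    set L := v i (k + 1) * a (Function.update b i ⟨k + 1, h⟩) i
        - p (Function.update b i ⟨k + 1, h⟩) i with hL
    set R := v i (k + 1) * a (Function.update b i ⟨k, Nat.lt_of_succ_lt h⟩) i
        - p (Function.update b i ⟨k, Nat.lt_of_succ_lt h⟩) i with hR
    have hε : 0 < L - R := sub_pos.mpr (lt_of_le_of_ne hd (fun hh => hne hh.symm))
    refine perturb_false K hK v f hf 𝒜 α hα a p hfeas hopt i b (k + 1) h (L - R) hε ?_ ?_
    · intro b' hb' k' h' ht'
      have hk : k' = k := by omega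
      subst hk
      rw [hupd_eq i b b' hb' ⟨k' + 1, h'⟩, hupd_eq i b b' hb' ⟨k', Nat.lt_of_succ_lt h'⟩]
      have e1 : (⟨k' + 1, h'⟩ : Fin (K i)) = ⟨k' + 1, h⟩ := rfl
      have e2 : (⟨k', Nat.lt_of_succ_lt h'⟩ : Fin (K i)) = ⟨k', Nat.lt_of_succ_lt h⟩ := rfl
      rw [e1, e2, ← hL, ← hR]
      linarith
    · intro b' hb' habs
      exact absurd habs (Nat.succ_ne_zero k)
  have hIRbind : ∀ (i : Fin n) (b : ∀ j, Fin (K j)),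
      v i 0 * a (Function.update b i ⟨0, hK i⟩) i
        - p (Function.update b i ⟨0, hK i⟩) i = 0 := by
    intro i b
    have hd := hfeas.2.2.2.2.1 i b
    by_contra hne
    set s := v i 0 * a (Function.update b i ⟨0, hK i⟩) i
        - p (Function.update b i ⟨0, hK i⟩) i with hs
    have hε : 0 < s := lt_of_le_of_ne hd (fun hh => hne hh.symm)
    refine perturb_false K hK v f hf 𝒜 α hα a p hfeas hopt i b 0 (hK i) s hε ?_ ?_
    · intro b' hb' k hcontra ht'
      exact absurd ht' (by omega)
    · intro b' hb' _
      rw [hupd_eq i b b' hb' ⟨0, hK i⟩, ← hs]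
      linarith
  refine ⟨hbind, ?_⟩
  have hP : ∀ (i : Fin n) (b : ∀ j, Fin (K j)) (k : ℕ) (h : k < K i),
      p (Function.update b i ⟨k, h⟩) i
        = v i k * a (Function.update b i ⟨k, h⟩) i
          - ∑ l ∈ Finset.range k, (v i (l + 1) - v i l) * allocAt K a i b l := by
    intro i b k
    induction k with
    | zero =>
      intro h
      have := hIRbind i b
      simp only [Finset.range_zero, Finset.sum_empty]
      have e : (⟨0, h⟩ : Fin (K i)) = ⟨0, hK i⟩ := rfl
      rw [e]
      linarith
    | succ k ih =>
      intro h
      have hk : k < K i := Nat.lt_of_succ_lt h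
      have heq := hbind i b k h
      have hI := ih hk
      have e2 : (⟨k, Nat.lt_of_succ_lt h⟩ : Fin (K i)) = ⟨k, hk⟩ := rfl
      rw [e2] at heq
      rw [Finset.sum_range_succ]
      have hAk : allocAt K a i b k = a (Function.update b i ⟨k, hk⟩) i := dif_pos hk
      rw [hAk]
      linarith
  intro i b
  have hbi : (⟨(b i).val, (b i).isLt⟩ : Fin (K i)) = b i := rfl
  have hb : Function.update b i ⟨(b i).val, (b i).isLt⟩ = b := by
    rw [hbi, Function.update_eq_self]
  have hform := hP i b (b i).val (b i).isLt
  rw [hb] at hform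
  rw [hform]
  congr 1
  rw [← Finset.sum_attach (Finset.range (b i).val)
    (fun l => (v i (l + 1) - v i l) * allocAt K a i b l)]
  apply Finset.sum_congr rfl
  intro l _
  have hl : l.val < K i := Nat.lt_trans (Finset.mem_range.mp l.2) (b i).isLt
  rw [show allocAt K a i b l.val = a (Function.update b i ⟨l.val, hl⟩) i from dif_pos hl]
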